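/- If τ ∈ I_n is a dominant involution (an involution that is 132-avoiding as a permutation), then the involution Schubert polynomial of τ factors as Ŝ_τ = ∏_{(i,i) ∈ D̂₁(τ)} x_i · ∏_{(i,j) ∈ D̂₂(τ), i<j} (x_i + x_j), where D̂(τ) = {(i,j) : j < τ(i), i < τ(j), i ≤ j}, D̂₁ is its diagonal part and D̂₂ its strictly-off-diagonal part. -/
import Mathlib



open Finset MvPolynomial

/-- The number of inversions (the length) of a permutation. -/
def invCount {n : ℕ} (w : Equiv.Perm (Fin n)) : ℕ :=
  (Finset.univ.filter fun p : Fin n × Fin n => p.1 < p.2 ∧ w p.2 < w p.1).card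

/-- The longest permutation `w_0`. -/
def w0 (n : ℕ) : Equiv.Perm (Fin n) := Fin.revPerm

open Classical in
/-- The divided difference operator `∂` with respect to variables `x_i`, `x_j`:
`∂(f) = (f - s·f)/(x_i - x_j)` where `s·f` swaps the variables `x_i` and `x_j`.
(It is `0` in the impossible case that the division cannot be carried out.) -/
noncomputable def ddiff {n : ℕ} (i j : Fin n) (f : MvPolynomial (Fin n) ℤ) :
    MvPolynomial (Fin n) ℤ :=
  if h : ∃ g, f - MvPolynomial.rename (Equiv.swap i j) f = (X i - X j) * g then h.choose
  else 0

/-- `IsSchubert w f` asserts that `f` is the Schubert polynomial of `w`, via the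
recursive definition: the Schubert polynomial of `w_0` is
`x_1^{n-1} x_2^{n-2} ⋯ x_{n-1}` (0-indexed: `∏ x_i^{n-1-i}`), and
`S_w = ∂_i (S_{w s_i})` whenever `ℓ(w s_i) = ℓ(w) + 1`. -/
inductive IsSchubert {n : ℕ} : Equiv.Perm (Fin n) → MvPolynomial (Fin n) ℤ → Prop
  | base : IsSchubert (w0 n) (∏ i : Fin n, X i ^ (n - 1 - i.val))
  | step (w : Equiv.Perm (Fin n)) (i : Fin n) (hi : i.val + 1 < n)
      (f : MvPolynomial (Fin n) ℤ) :
      IsSchubert (w * Equiv.swap i ⟨i.val + 1, hi⟩) f →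
      invCount (w * Equiv.swap i ⟨i.val + 1, hi⟩) = invCount w + 1 →
      IsSchubert w (ddiff i ⟨i.val + 1, hi⟩ f)



/-- The Richardson–Springer monoid action of the generator `m(s_i)` on involutions:
`m(s_i)·τ = τ` if `τ(i+1) < τ(i)`; `m(s_i)·τ = s_i τ` if `τ` fixes both `i` and `i+1`;
and `m(s_i)·τ = s_i τ s_i` otherwise. -/
def mAct {n : ℕ} (i : Fin n) (τ : Equiv.Perm (Fin n)) : Equiv.Perm (Fin n) :=
  if h : i.val + 1 < n then
    let j : Fin n := ⟨i.val + 1, h⟩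
    let s := Equiv.swap i j
    if τ j < τ i then τ
    else if τ i = i ∧ τ j = j then s * τ
    else s * τ * s
  else τ

/-- The involution diagram `D̂(τ)`. -/
def invDiagram (n : ℕ) (τ : Equiv.Perm (Fin n)) : Finset (Fin n × Fin n) :=
  Finset.univ.filter fun p => p.2 < τ p.1 ∧ p.1 < τ p.2 ∧ p.1 ≤ p.2

/-- The involution length `ℓ̂(τ) = #D̂(τ)`. -/
def invLen {n : ℕ} (τ : Equiv.Perm (Fin n)) : ℕ := (invDiagram n τ).card

/-- `IsInvSchubert τ f` asserts that `f` is the involution Schubert polynomial of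
the involution `τ`, via the recursive definition: for the longest permutation `τ_0`,
`Ŝ_{τ_0} = x_1 ⋯ x_{⌊n/2⌋} ∏_{0 < i < j ≤ n-i} (x_i + x_j)` (0-indexed below), and
`Ŝ_τ = ∂_i (Ŝ_{τ'})` whenever `τ' = m(s_i)·τ` has `ℓ̂(τ') = ℓ̂(τ) + 1`. -/
inductive IsInvSchubert {n : ℕ} : Equiv.Perm (Fin n) → MvPolynomial (Fin n) ℤ → Prop
  | base :
      IsInvSchubert (w0 n)
        ((∏ i ∈ Finset.univ.filter fun i : Fin n => i.val < n / 2, X i) *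
          ∏ p ∈ Finset.univ.filter
              fun p : Fin n × Fin n => p.1 < p.2 ∧ p.1.val + p.2.val + 2 ≤ n,
            (X p.1 + X p.2))
  | step (τ : Equiv.Perm (Fin n)) (i : Fin n) (hi : i.val + 1 < n)
      (f : MvPolynomial (Fin n) ℤ) :
      IsInvSchubert (mAct i τ) f →
      invLen (mAct i τ) = invLen τ + 1 →
      IsInvSchubert τ (ddiff i ⟨i.val + 1, hi⟩ f)


-- ===================== auxiliary development =====================
set_option linter.unusedSectionVars false
set_option maxHeartbeats 2000000

namespace ISP
open Finset MvPolynomial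

variable {n : ℕ} {τ : Equiv.Perm (Fin n)}

def InD (τ : Equiv.Perm (Fin n)) (a b : Fin n) : Prop := b < τ a ∧ a < τ b

def Dom (τ : Equiv.Perm (Fin n)) : Prop :=
  ∀ a b c : Fin n, a < b → b < c → τ a < τ c → τ c < τ b → False

lemma InD_comm {a b : Fin n} : InD τ a b ↔ InD τ b a := and_comm

lemma tau_eq_iff (hinv : ∀ x, τ (τ x) = x) {a b : Fin n} : τ a = b ↔ a = τ b :=
  ⟨fun h => by rw [← h, hinv], fun h => by rw [h, hinv]⟩

lemma tau_ne_of_ne (hinv : ∀ x, τ (τ x) = x) {a b : Fin n} (h : a ≠ τ b) : τ a ≠ b :=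
  fun he => h ((tau_eq_iff hinv).1 he)

lemma closure_left (hinv : ∀ x, τ (τ x) = x) (hdom : Dom τ) {a b a' : Fin n}
    (h : InD τ a b) (ha : a' ≤ a) : InD τ a' b := by
  obtain ⟨hb, haa⟩ := h
  refine ⟨?_, lt_of_le_of_lt ha haa⟩
  by_contra hle
  push_neg at hle
  rcases eq_or_lt_of_le hle with heq | hlt
  · have h2 : a' = τ b := (tau_eq_iff hinv).1 heq
    exact absurd (h2 ▸ haa) (not_lt.2 (h2 ▸ ha))
  · have hane : a' < a := by
      rcases eq_or_lt_of_le ha with rfl | h'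
      · exact absurd hb (not_lt.2 hle)
      · exact h'
    exact hdom a' a (τ b) hane haa (by rw [hinv]; exact hlt) (by rw [hinv]; exact hb)

lemma closure (hinv : ∀ x, τ (τ x) = x) (hdom : Dom τ) {a b a' b' : Fin n}
    (h : InD τ a b) (ha : a' ≤ a) (hb : b' ≤ b) : InD τ a' b' := by
  have h1 := closure_left hinv hdom h ha
  exact InD_comm.1 (closure_left hinv hdom (InD_comm.1 h1) hb)

lemma dom_of_closed {σ : Equiv.Perm (Fin n)} (hinv : ∀ x, σ (σ x) = x)
    (hcl : ∀ a b a' b' : Fin n, InD σ a b → a' ≤ a → b' ≤ b → InD σ a' b') : Dom σ := by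
  intro a b c hab hbc h1 h2
  have hm : InD σ b (σ c) := ⟨h2, by rw [hinv]; exact hbc⟩
  have := hcl b (σ c) a (σ c) hm hab.le le_rfl
  exact absurd this.1 (not_lt.2 h1.le)

lemma diagram_insert {σ : Equiv.Perm (Fin n)} {c : Fin n × Fin n} (hc : c.1 ≤ c.2)
    (char : ∀ a b, InD σ a b ↔ (InD τ a b ∨ (a = c.1 ∧ b = c.2) ∨ (a = c.2 ∧ b = c.1)))
    (hnew : ¬ InD τ c.1 c.2) :
    invDiagram n σ = insert c (invDiagram n τ) ∧ c ∉ invDiagram n τ := by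
  constructor
  · ext p
    simp only [invDiagram, Finset.mem_filter, Finset.mem_insert, Finset.mem_univ, true_and]
    have hch := char p.1 p.2
    constructor
    · rintro ⟨h1, h2, h3⟩
      rcases hch.1 ⟨h1, h2⟩ with h | ⟨ha, hb⟩ | ⟨ha, hb⟩
      · exact Or.inr ⟨h.1, h.2, h3⟩
      · exact Or.inl (Prod.ext ha hb)
      · have h4 : c.2 ≤ c.1 := ha ▸ hb ▸ h3
        have hcc : c.1 = c.2 := le_antisymm hc h4
        exact Or.inl (Prod.ext (ha.trans hcc.symm) (hb.trans hcc))
    · rintro (rfl | ⟨h1, h2, h3⟩)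
      · have := hch.2 (Or.inr (Or.inl ⟨rfl, rfl⟩))
        exact ⟨this.1, this.2, hc⟩
      · have := hch.2 (Or.inl ⟨h1, h2⟩)
        exact ⟨this.1, this.2, h3⟩
  · intro hmem
    simp only [invDiagram, Finset.mem_filter] at hmem
    exact hnew ⟨hmem.2.1, hmem.2.2.1⟩

lemma X_sub_X_ne {i j : Fin n} (h : i ≠ j) :
    (X i - X j : MvPolynomial (Fin n) ℤ) ≠ 0 := by
  intro he
  have := congrArg (MvPolynomial.coeff (Finsupp.single i 1)) he
  simp [MvPolynomial.coeff_X', Finsupp.single_eq_single_iff, h, (Ne.symm h)] at this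

lemma ddiff_eq {i j : Fin n} (hij : i ≠ j) {f g : MvPolynomial (Fin n) ℤ}
    (h : f - MvPolynomial.rename (Equiv.swap i j) f = (X i - X j) * g) :
    ddiff i j f = g := by
  have hex : ∃ g, f - MvPolynomial.rename (Equiv.swap i j) f = (X i - X j) * g := ⟨g, h⟩
  rw [ddiff, dif_pos hex]
  exact mul_left_cancel₀ (X_sub_X_ne hij) (hex.choose_spec.symm.trans h)

/-- the involution Schubert product formula -/
noncomputable def Pol (τ : Equiv.Perm (Fin n)) : MvPolynomial (Fin n) ℤ :=
  (∏ a ∈ Finset.univ.filter fun a : Fin n => a < τ a, X a) *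
    ∏ p ∈ (invDiagram n τ).filter fun p => p.1 < p.2, (X p.1 + X p.2)

def swapSort (s : Equiv.Perm (Fin n)) (p : Fin n × Fin n) : Fin n × Fin n :=
  if s p.1 < s p.2 then (s p.1, s p.2) else (s p.2, s p.1)

lemma swapSort_pos {s : Equiv.Perm (Fin n)} {p : Fin n × Fin n} (h : s p.1 < s p.2) :
    swapSort s p = (s p.1, s p.2) := if_pos h

lemma swapSort_neg {s : Equiv.Perm (Fin n)} {p : Fin n × Fin n} (h : ¬ s p.1 < s p.2) :
    swapSort s p = (s p.2, s p.1) := if_neg h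

lemma rename_Pol {i j : Fin n} (hstep : ∀ a b : Fin n, InD τ a b →
      InD τ (Equiv.swap i j a) (Equiv.swap i j b)) :
    rename (Equiv.swap i j) (Pol τ) = Pol τ := by
  set s := Equiv.swap i j with hs
  have hss : ∀ x : Fin n, s (s x) = x := fun x => Equiv.swap_apply_self i j x
  rw [Pol, map_mul, map_prod, map_prod]
  congr 1
  · simp only [rename_X]
    have hmaps : ∀ a ∈ Finset.univ.filter (fun a : Fin n => a < τ a),
        s a ∈ Finset.univ.filter (fun a : Fin n => a < τ a) := by
      intro a ha
      simp only [mem_filter, mem_univ, true_and] at ha ⊢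
      exact (hstep a a ⟨ha, ha⟩).1
    refine prod_nbij' (fun a => s a) (fun a => s a) hmaps hmaps
      (fun a _ => hss a) (fun a _ => hss a) (fun a _ => rfl)
  · simp only [map_add, rename_X]
    have hmemF : ∀ p : Fin n × Fin n,
        p ∈ (invDiagram n τ).filter (fun p => p.1 < p.2) ↔
          (InD τ p.1 p.2 ∧ p.1 < p.2) := by
      intro p
      simp only [invDiagram, mem_filter, mem_univ, true_and, InD]
      constructor
      · rintro ⟨⟨h1, h2, _⟩, h4⟩; exact ⟨⟨h1, h2⟩, h4⟩
      · rintro ⟨⟨h1, h2⟩, h4⟩; exact ⟨⟨h1, h2, h4.le⟩, h4⟩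
    have hmaps : ∀ p ∈ (invDiagram n τ).filter (fun p => p.1 < p.2),
        swapSort s p ∈ (invDiagram n τ).filter (fun p => p.1 < p.2) := by
      intro p hp
      rw [hmemF] at hp
      obtain ⟨hin, hlt⟩ := hp
      by_cases h : s p.1 < s p.2
      · rw [swapSort_pos h, hmemF]
        exact ⟨hstep _ _ hin, h⟩
      · have hne : s p.1 ≠ s p.2 := fun he => (ne_of_lt hlt) (s.injective he)
        have h' : s p.2 < s p.1 := lt_of_le_of_ne (not_lt.1 h) (Ne.symm hne)
        rw [swapSort_neg h, hmemF]
        exact ⟨InD_comm.1 (hstep _ _ hin), h'⟩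
    have hinvol : ∀ p ∈ (invDiagram n τ).filter (fun p => p.1 < p.2),
        swapSort s (swapSort s p) = p := by
      intro p hp
      rw [hmemF] at hp
      by_cases h : s p.1 < s p.2
      · rw [swapSort_pos h]
        rw [swapSort_pos (p := (s p.1, s p.2)) (by rw [hss, hss]; exact hp.2)]
        rw [hss, hss]
      · rw [swapSort_neg h]
        rw [swapSort_neg (p := (s p.2, s p.1))
          (by rw [hss, hss]; exact not_lt.2 hp.2.le)]
        rw [hss, hss]
    refine prod_nbij' (swapSort s) (swapSort s) hmaps hmaps hinvol hinvol ?_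
    intro p hp
    by_cases h : s p.1 < s p.2
    · rw [swapSort_pos h]
    · rw [swapSort_neg h]
      exact add_comm _ _

lemma Pol_w0 : Pol (w0 n) =
    ((∏ i ∈ Finset.univ.filter fun i : Fin n => i.val < n / 2, X i) *
      ∏ p ∈ Finset.univ.filter
          (fun p : Fin n × Fin n => p.1 < p.2 ∧ p.1.val + p.2.val + 2 ≤ n),
        (X p.1 + X p.2)) := by
  have hval : ∀ x : Fin n, (w0 n x : ℕ) = n - 1 - (x : ℕ) := by
    intro x
    show (Fin.revPerm x : ℕ) = _
    rw [Fin.revPerm_apply, Fin.val_rev]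
    omega
  have e1 : (Finset.univ.filter fun a : Fin n => a < w0 n a)
      = (Finset.univ.filter fun i : Fin n => i.val < n / 2) := by
    apply filter_congr
    intro a _
    simp only [Fin.lt_def, hval a, eq_iff_iff]
    have h1 := a.isLt
    omega
  have e2 : ((invDiagram n (w0 n)).filter fun p => p.1 < p.2)
      = (Finset.univ.filter
          fun p : Fin n × Fin n => p.1 < p.2 ∧ p.1.val + p.2.val + 2 ≤ n) := by
    ext p
    simp only [invDiagram, mem_filter, mem_univ, true_and, Fin.lt_def, Fin.le_def,
      hval p.1, hval p.2]
    have h1 := p.1.isLt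
    have h2 := p.2.isLt
    omega
  rw [Pol, e1, e2]

lemma Pol_factor_off {σ : Equiv.Perm (Fin n)} {c : Fin n × Fin n} (hlt : c.1 < c.2)
    (hD : invDiagram n σ = insert c (invDiagram n τ)) (hnc : c ∉ invDiagram n τ)
    (hdiag : ∀ a, (a < σ a) ↔ (a < τ a)) :
    Pol σ = (X c.1 + X c.2) * Pol τ := by
  have h1 : Finset.univ.filter (fun a => a < σ a)
      = Finset.univ.filter (fun a => a < τ a) :=
    filter_congr (fun a _ => hdiag a)
  have h2 : (invDiagram n σ).filter (fun p => p.1 < p.2)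
      = insert c ((invDiagram n τ).filter (fun p => p.1 < p.2)) := by
    rw [hD, filter_insert, if_pos hlt]
  have h3 : c ∉ (invDiagram n τ).filter (fun p => p.1 < p.2) :=
    fun h => hnc (mem_of_mem_filter c h)
  rw [Pol, Pol, h1, h2, prod_insert h3]
  ring

lemma Pol_factor_diag {σ : Equiv.Perm (Fin n)} {i : Fin n}
    (hD : invDiagram n σ = insert (i, i) (invDiagram n τ))
    (hdiag : ∀ a, (a < σ a) ↔ (a = i ∨ a < τ a)) (hfixi : τ i = i) :
    Pol σ = X i * Pol τ := by
  have h1 : Finset.univ.filter (fun a => a < σ a)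
      = insert i (Finset.univ.filter (fun a => a < τ a)) := by
    ext a
    simp only [mem_filter, mem_univ, true_and, mem_insert, hdiag a]
  have hni : i ∉ Finset.univ.filter (fun a : Fin n => a < τ a) := by
    simp [hfixi]
  have h2 : (invDiagram n σ).filter (fun p => p.1 < p.2)
      = (invDiagram n τ).filter (fun p => p.1 < p.2) := by
    rw [hD, filter_insert, if_neg (lt_irrefl i)]
  rw [Pol, Pol, h1, prod_insert hni, h2]
  ring

lemma ddiff_step {σ : Equiv.Perm (Fin n)} {i j : Fin n} (hij : i ≠ j)
    {Fc : MvPolynomial (Fin n) ℤ}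
    (hfac : Pol σ = Fc * Pol τ)
    (hFc : Fc - rename (Equiv.swap i j) Fc = X i - X j)
    (hsym : rename (Equiv.swap i j) (Pol τ) = Pol τ) :
    ddiff i j (Pol σ) = Pol τ := by
  apply ddiff_eq hij
  rw [hfac, map_mul, hsym, ← sub_mul, hFc]

lemma mAct_eq_A {i : Fin n} (hi : (i:ℕ)+1 < n)
    (h1 : ¬ τ (⟨(i:ℕ)+1, hi⟩ : Fin n) < τ i)
    (h2 : τ i = i ∧ τ (⟨(i:ℕ)+1, hi⟩ : Fin n) = (⟨(i:ℕ)+1, hi⟩ : Fin n)) :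
    mAct i τ = Equiv.swap i (⟨(i:ℕ)+1, hi⟩ : Fin n) * τ := by
  unfold mAct
  rw [dif_pos hi]
  simp only [if_neg h1, if_pos h2]

lemma mAct_eq_B {i : Fin n} (hi : (i:ℕ)+1 < n)
    (h1 : ¬ τ (⟨(i:ℕ)+1, hi⟩ : Fin n) < τ i)
    (h2 : ¬ (τ i = i ∧ τ (⟨(i:ℕ)+1, hi⟩ : Fin n) = (⟨(i:ℕ)+1, hi⟩ : Fin n))) :
    mAct i τ = Equiv.swap i (⟨(i:ℕ)+1, hi⟩ : Fin n) * τ *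
      Equiv.swap i (⟨(i:ℕ)+1, hi⟩ : Fin n) := by
  unfold mAct
  rw [dif_pos hi]
  simp only [if_neg h1, if_neg h2]

lemma eq_w0 (hdec : ∀ k : Fin n, ∀ hk : (k:ℕ)+1 < n, τ ⟨(k:ℕ)+1, hk⟩ < τ k) :
    τ = w0 n := by
  have key : ∀ d : ℕ, ∀ a b : Fin n, (b:ℕ) = (a:ℕ) + d → (τ b:ℕ) + d ≤ (τ a:ℕ) := by
    intro d
    induction d with
    | zero =>
      intro a b hb
      have hab : b = a := Fin.ext (by omega)
      rw [hab]; omega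
    | succ d ih =>
      intro a b hb
      have hk : (a:ℕ)+1 < n := by have := b.isLt; omega
      have h1 := ih ⟨(a:ℕ)+1, hk⟩ b (by simp only [Fin.val_mk]; omega)
      have h2 := Fin.lt_def.1 (hdec a hk)
      omega
  apply Equiv.ext
  intro x
  have hn : 0 < n := x.pos
  have h1 := key (x:ℕ) ⟨0, hn⟩ x (by simp)
  have h2 := key (n - 1 - (x:ℕ)) x ⟨n-1, by omega⟩ (by simp only [Fin.val_mk]; omega)
  have hlt1 : (τ ⟨0, hn⟩ : ℕ) < n := (τ _).isLt
  have hw : (w0 n x : ℕ) = n - 1 - (x:ℕ) := by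
    show (Fin.revPerm x : ℕ) = _
    rw [Fin.revPerm_apply, Fin.val_rev]
    omega
  apply Fin.ext
  rw [hw]
  have h3 := (τ x).isLt
  have hx := x.isLt
  omega

lemma asc_of_not_lt {m : Fin n} (hm : (m:ℕ)+1 < n)
    (h : τ m ≤ τ (⟨(m:ℕ)+1, hm⟩ : Fin n)) : τ m < τ (⟨(m:ℕ)+1, hm⟩ : Fin n) := by
  rcases eq_or_lt_of_le h with h1 | h1
  · exfalso
    have := congrArg Fin.val (τ.injective h1)
    simp only [Fin.val_mk] at this
    omega
  · exact h1

lemma pre_of_min {i : Fin n}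
    (hmin : ∀ m : Fin n, m < i → ∀ hm : (m:ℕ)+1 < n, τ ⟨(m:ℕ)+1, hm⟩ < τ m) :
    ∀ a b : Fin n, a < b → b ≤ i → τ b < τ a := by
  have key : ∀ d : ℕ, ∀ a b : Fin n, (b:ℕ) = (a:ℕ) + d + 1 → b ≤ i → τ b < τ a := by
    intro d
    induction d with
    | zero =>
      intro a b hb hbi
      have hk : (a:ℕ)+1 < n := by have := b.isLt; omega
      have hbe : b = ⟨(a:ℕ)+1, hk⟩ := Fin.ext (by simp only [Fin.val_mk]; omega)
      have hai : a < i := by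
        rw [Fin.lt_def]
        have h1 := Fin.le_def.1 hbi
        omega
      rw [hbe]
      exact hmin a hai hk
    | succ d ih =>
      intro a b hb hbi
      have hk : (a:ℕ)+1 < n := by have := b.isLt; omega
      have h1 : τ b < τ ⟨(a:ℕ)+1, hk⟩ :=
        ih ⟨(a:ℕ)+1, hk⟩ b (by simp only [Fin.val_mk]; omega) hbi
      have hai : a < i := by
        rw [Fin.lt_def]
        have h2 := Fin.le_def.1 hbi
        omega
      exact lt_trans h1 (hmin a hai hk)
  intro a b hab hbi
  exact key ((b:ℕ) - (a:ℕ) - 1) a b (by have := Fin.lt_def.1 hab; omega) hbi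

section FirstAscent
variable {i j : Fin n} (hj : (j : ℕ) = (i : ℕ) + 1)
  (hinv : ∀ x, τ (τ x) = x) (hdom : Dom τ) (hasc : τ i < τ j)
  (hpre : ∀ a b : Fin n, a < b → b ≤ i → τ b < τ a)

include hj hinv hdom hasc hpre

lemma hij : i < j := by rw [Fin.lt_def, hj]; omega

lemma rowfull {k b : Fin n} (hk : k ≤ i) (hb : b < τ k) : k < τ b := by
  rcases lt_trichotomy (τ b) k with hlt | heq | hgt
  · have := hpre (τ b) k hlt hk
    rw [hinv] at this
    exact absurd hb (not_lt.2 this.le)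
  · exact absurd ((tau_eq_iff hinv).1 heq) (ne_of_lt hb)
  · exact hgt

lemma LB1 (hfix : τ i = i) : τ j = j := by
  by_contra hne
  have h1 : τ j ≠ i := by
    intro h
    have : j = τ i := (tau_eq_iff hinv).1 h
    rw [hfix] at this
    exact absurd this (ne_of_gt (hij hj hinv hdom hasc hpre))
  have h2 : j < τ j := by
    rcases lt_trichotomy (τ j) j with hlt | heq | hgt
    · exfalso
      have hv : (τ j : ℕ) < i := by
        have := Fin.lt_def.1 hlt
        have h1' : (τ j : ℕ) ≠ (i : ℕ) := fun h => h1 (Fin.ext h)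
        omega
      rw [← hfix] at hv
      exact absurd (Fin.lt_def.2 hv) (not_lt.2 hasc.le)
    · exact absurd heq hne
    · exact hgt
  refine hdom i j (τ j) (hij hj hinv hdom hasc hpre) h2 ?_ ?_
  · rw [hinv, hfix]; exact hij hj hinv hdom hasc hpre
  · rw [hinv]; exact h2

lemma LB2 (hlt : τ i < i) : τ j = j := by
  by_contra hne
  have h1 : τ j ≠ i := by
    intro h
    have : j = τ i := (tau_eq_iff hinv).1 h
    rw [← this] at hlt
    exact absurd hlt (not_lt.2 (hij hj hinv hdom hasc hpre).le)
  rcases lt_trichotomy (τ j) j with hlt2 | heq | hgt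
  · have hji : (τ j : ℕ) < i := by
      have := Fin.lt_def.1 hlt2
      have h1' : (τ j : ℕ) ≠ (i : ℕ) := fun h => h1 (Fin.ext h)
      omega
    have := hpre (τ i) (τ j) hasc (le_of_lt (Fin.lt_def.2 hji))
    rw [hinv, hinv] at this
    exact absurd this (not_lt.2 (hij hj hinv hdom hasc hpre).le)
  · exact absurd heq hne
  · refine hdom (τ i) j (τ j) (lt_trans hlt (hij hj hinv hdom hasc hpre)) hgt ?_ ?_
    · rw [hinv, hinv]; exact hij hj hinv hdom hasc hpre
    · rw [hinv]; exact hgt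

lemma LB3 (hgt : i < τ i) : j < τ i := by
  have h1 : τ i ≠ j := by
    intro h
    have : i = τ j := (tau_eq_iff hinv).1 h
    rw [← this] at hasc
    exact absurd (lt_trans hgt hasc) (lt_irrefl i)
  rw [Fin.lt_def] at hgt ⊢
  have : (τ i : ℕ) ≠ (j : ℕ) := fun h => h1 (Fin.ext h)
  omega

lemma symI {b : Fin n} (hbi : b ≠ i) (hbj : b ≠ j) (h : InD τ i b) : InD τ j b := by
  obtain ⟨h1, h2⟩ := h
  refine ⟨lt_trans h1 hasc, ?_⟩
  have hne : τ b ≠ j := by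
    apply tau_ne_of_ne hinv
    intro he
    rw [he] at h1
    exact absurd (lt_trans h1 hasc) (lt_irrefl _)
  rw [Fin.lt_def] at h2 ⊢
  have h3 : (τ b : ℕ) ≠ (j : ℕ) := fun h => hne (Fin.ext h)
  omega

lemma symJ {b : Fin n} (hbi : b ≠ i) (hbj : b ≠ j) (h : InD τ j b) : InD τ i b := by
  obtain ⟨h1, h2⟩ := h
  refine ⟨?_, lt_trans (hij hj hinv hdom hasc hpre) h2⟩
  rcases lt_trichotomy b (τ i) with hlt | heq | hgt
  · exact hlt
  · exfalso
    have hbt : τ b = i := by rw [heq, hinv]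
    rw [hbt] at h2
    exact absurd (lt_trans (hij hj hinv hdom hasc hpre) h2) (lt_irrefl _)
  · exact (hdom i j (τ b) (hij hj hinv hdom hasc hpre) h2
      (by rw [hinv]; exact hgt) (by rw [hinv]; exact h1)).elim

lemma symD1 (h : i < τ i) : j < τ j :=
  lt_trans (LB3 hj hinv hdom hasc hpre h) hasc

lemma symD2 (h : j < τ j) : i < τ i := by
  rcases lt_trichotomy i (τ i) with hlt | heq | hgt
  · exact hlt
  · rw [LB1 hj hinv hdom hasc hpre heq.symm] at h; exact absurd h (lt_irrefl _)
  · rw [LB2 hj hinv hdom hasc hpre hgt] at h; exact absurd h (lt_irrefl _)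

lemma sym_step : ∀ a b : Fin n, InD τ a b →
    InD τ (Equiv.swap i j a) (Equiv.swap i j b) := by
  intro a b h
  rcases eq_or_ne a i with ha | hai
  · rw [ha, Equiv.swap_apply_left]
    rw [ha] at h
    rcases eq_or_ne b i with hb | hbi
    · rw [hb, Equiv.swap_apply_left]
      rw [hb] at h
      have := symD1 hj hinv hdom hasc hpre h.1
      exact ⟨this, this⟩
    rcases eq_or_ne b j with hb | hbj
    · rw [hb, Equiv.swap_apply_right]
      rw [hb] at h
      exact InD_comm.1 h
    · rw [Equiv.swap_apply_of_ne_of_ne hbi hbj]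
      exact symI hj hinv hdom hasc hpre hbi hbj h
  rcases eq_or_ne a j with ha | haj
  · rw [ha, Equiv.swap_apply_right]
    rw [ha] at h
    rcases eq_or_ne b i with hb | hbi
    · rw [hb, Equiv.swap_apply_left]
      rw [hb] at h
      exact InD_comm.1 h
    rcases eq_or_ne b j with hb | hbj
    · rw [hb, Equiv.swap_apply_right]
      rw [hb] at h
      have := symD2 hj hinv hdom hasc hpre h.1
      exact ⟨this, this⟩
    · rw [Equiv.swap_apply_of_ne_of_ne hbi hbj]
      exact symJ hj hinv hdom hasc hpre hbi hbj h
  · rw [Equiv.swap_apply_of_ne_of_ne hai haj]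
    rcases eq_or_ne b i with hb | hbi
    · rw [hb, Equiv.swap_apply_left]
      rw [hb] at h
      exact InD_comm.1 (symI hj hinv hdom hasc hpre hai haj (InD_comm.1 h))
    rcases eq_or_ne b j with hb | hbj
    · rw [hb, Equiv.swap_apply_right]
      rw [hb] at h
      exact InD_comm.1 (symJ hj hinv hdom hasc hpre hai haj (InD_comm.1 h))
    · rw [Equiv.swap_apply_of_ne_of_ne hbi hbj]
      exact h

lemma MID2 (hfixj : τ j = j) : ∀ x : Fin n, τ i < x → x < i → τ x < i := by
  intro x h1 h2
  have hij' : i < j := hij hj hinv hdom hasc hpre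
  have hxi : τ x ≠ i := tau_ne_of_ne hinv (ne_of_gt h1)
  have hxj : τ x ≠ j := tau_ne_of_ne hinv (by rw [hfixj]; exact ne_of_lt (lt_trans h2 hij'))
  have hnj : ¬ (j < τ x) := fun hgt => hdom i j (τ x) hij' hgt
    (by rw [hinv]; exact h1) (by rw [hinv, hfixj]; exact lt_trans h2 hij')
  have v1 : ¬ ((j : ℕ) < (τ x : ℕ)) := fun hh => hnj (Fin.lt_def.2 hh)
  have v2 : (τ x : ℕ) ≠ (j : ℕ) := fun hh => hxj (Fin.ext hh)
  have v3 : (τ x : ℕ) ≠ (i : ℕ) := fun hh => hxi (Fin.ext hh)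
  rw [Fin.lt_def]
  omega

lemma LOW2 (hu : τ i < i) (hfixj : τ j = j) : ∀ x : Fin n, x < τ i → j < τ x := by
  intro x hx
  have hij' : i < j := hij hj hinv hdom hasc hpre
  have h1 : i < τ x := rowfull hj hinv hdom hasc hpre le_rfl hx
  have h2 : τ x ≠ j := tau_ne_of_ne hinv
    (by rw [hfixj]; exact ne_of_lt (lt_trans hx (lt_trans hu hij')))
  have v1 : (i : ℕ) < (τ x : ℕ) := Fin.lt_def.1 h1
  have v2 : (τ x : ℕ) ≠ (j : ℕ) := fun hh => h2 (Fin.ext hh)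
  rw [Fin.lt_def]
  omega

lemma MID3 (hji : j < τ i) : ∀ x : Fin n, τ i < x → x < τ j → τ x < i := by
  intro x h1 h2
  have hij' : i < j := hij hj hinv hdom hasc hpre
  have hxi : τ x ≠ i := tau_ne_of_ne hinv (ne_of_gt h1)
  have hxj : τ x ≠ j := tau_ne_of_ne hinv (ne_of_lt h2)
  have hnj : ¬ (j < τ x) := fun hgt => hdom i j (τ x) hij' hgt
    (by rw [hinv]; exact h1) (by rw [hinv]; exact h2)
  have v1 : ¬ ((j : ℕ) < (τ x : ℕ)) := fun hh => hnj (Fin.lt_def.2 hh)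
  have v2 : (τ x : ℕ) ≠ (j : ℕ) := fun hh => hxj (Fin.ext hh)
  have v3 : (τ x : ℕ) ≠ (i : ℕ) := fun hh => hxi (Fin.ext hh)
  rw [Fin.lt_def]
  omega

section CaseB2
variable {σ : Equiv.Perm (Fin n)} (hu : τ i < i) (hfixj : τ j = j)
  (hσi : σ i = i) (hσj : σ j = τ i) (hσu : σ (τ i) = j)
  (hσo : ∀ x, x ≠ i → x ≠ j → x ≠ τ i → σ x = τ x)

include hu hfixj hσi hσj hσu hσo

lemma caseB2_mem : ∀ a b : Fin n,
    InD σ a b ↔ (InD τ a b ∨ (a = τ i ∧ b = i) ∨ (a = i ∧ b = τ i)) := by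
  have hij' : i < j := hij hj hinv hdom hasc hpre
  have hmid := MID2 hj hinv hdom hasc hpre hfixj
  have pack : ∀ x : Fin n,
      ((x : ℕ) = i → (σ x : ℕ) = i ∧ (τ x : ℕ) = (τ i : ℕ)) ∧
      ((x : ℕ) = j → (σ x : ℕ) = (τ i : ℕ) ∧ (τ x : ℕ) = j) ∧
      ((x : ℕ) = (τ i : ℕ) → (σ x : ℕ) = j ∧ (τ x : ℕ) = i) ∧
      ((x : ℕ) ≠ i → (x : ℕ) ≠ j → (x : ℕ) ≠ (τ i : ℕ) → (σ x : ℕ) = (τ x : ℕ)) ∧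
      ((τ x : ℕ) = i → (x : ℕ) = (τ i : ℕ)) ∧
      ((τ x : ℕ) = j → (x : ℕ) = j) ∧
      ((τ i : ℕ) < x → (x : ℕ) < i → (τ x : ℕ) < i) := by
    intro x
    refine ⟨fun h => ?_, fun h => ?_, fun h => ?_, fun h1 h2 h3 => ?_,
      fun h => ?_, fun h => ?_,
      fun h1 h2 => Fin.lt_def.1 (hmid x (Fin.lt_def.2 h1) (Fin.lt_def.2 h2))⟩
    · have hx : x = i := Fin.ext h
      rw [hx, hσi]; exact ⟨rfl, rfl⟩
    · have hx : x = j := Fin.ext h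
      rw [hx, hσj, hfixj]; exact ⟨rfl, rfl⟩
    · have hx : x = τ i := Fin.ext h
      rw [hx, hσu, hinv]; exact ⟨rfl, rfl⟩
    · rw [hσo x (fun he => h1 (congrArg Fin.val he)) (fun he => h2 (congrArg Fin.val he))
        (fun he => h3 (congrArg Fin.val he))]
    · have hx : x = τ i := (tau_eq_iff hinv).1 (Fin.ext h)
      exact congrArg Fin.val hx
    · have hx : x = τ j := (tau_eq_iff hinv).1 (Fin.ext h)
      rw [hfixj] at hx
      exact congrArg Fin.val hx
  intro a b
  have Ha := pack a
  have Hb := pack b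
  have c1 : (τ i : ℕ) < i := Fin.lt_def.1 hu
  have c2 : (i : ℕ) + 1 = j := hj.symm
  simp only [InD, Fin.lt_def, Fin.ext_iff]
  omega

lemma caseB2_inv : ∀ x, σ (σ x) = x := by
  intro x
  have hij' : i < j := hij hj hinv hdom hasc hpre
  rcases eq_or_ne x i with rfl | h1
  · rw [hσi, hσi]
  rcases eq_or_ne x j with rfl | h2
  · rw [hσj, hσu]
  rcases eq_or_ne x (τ i) with rfl | h3
  · rw [hσu, hσj]
  · rw [hσo x h1 h2 h3]
    have t1 : τ x ≠ i := tau_ne_of_ne hinv h3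
    have t2 : τ x ≠ j := tau_ne_of_ne hinv (by rw [hfixj]; exact h2)
    have t3 : τ x ≠ τ i := fun he => h1 (τ.injective he)
    rw [hσo (τ x) t1 t2 t3, hinv]

lemma caseB2_half : ∀ a' b' : Fin n, a' ≤ τ i → b' ≤ i →
    (InD τ a' b' ∨ (a' = τ i ∧ b' = i)) := by
  intro a' b' ha hb
  have hij' : i < j := hij hj hinv hdom hasc hpre
  rcases eq_or_lt_of_le hb with heq | hlt
  · rcases eq_or_lt_of_le ha with heqa | hlta
    · exact Or.inr ⟨heqa, heq⟩
    · refine Or.inl ?_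
      rw [heq]
      exact ⟨lt_trans hij' (LOW2 hj hinv hdom hasc hpre hu hfixj a' hlta), hlta⟩
  · have hri : InD τ (τ i) b' := ⟨by rw [hinv]; exact hlt,
      rowfull hj hinv hdom hasc hpre hu.le (by rw [hinv]; exact hlt)⟩
    exact Or.inl (closure hinv hdom hri ha le_rfl)

lemma caseB2_closed : ∀ a b a' b' : Fin n, InD σ a b → a' ≤ a → b' ≤ b → InD σ a' b' := by
  intro a b a' b' h ha hb
  have hchar := caseB2_mem hj hinv hdom hasc hpre hu hfixj hσi hσj hσu hσo
  rcases (hchar a b).1 h with h0 | ⟨ha1, hb1⟩ | ⟨ha1, hb1⟩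
  · exact (hchar a' b').2 (Or.inl (closure hinv hdom h0 ha hb))
  · subst ha1; subst hb1
    rcases caseB2_half hj hinv hdom hasc hpre hu hfixj hσi hσj hσu hσo a' b' ha hb with
      h0 | ⟨h1, h2⟩
    · exact (hchar a' b').2 (Or.inl h0)
    · exact (hchar a' b').2 (Or.inr (Or.inl ⟨h1, h2⟩))
  · subst ha1; subst hb1
    rcases caseB2_half hj hinv hdom hasc hpre hu hfixj hσi hσj hσu hσo b' a' hb ha with
      h0 | ⟨h1, h2⟩
    · exact (hchar a' b').2 (Or.inl (InD_comm.1 h0))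
    · exact (hchar a' b').2 (Or.inr (Or.inr ⟨h2, h1⟩))

lemma caseB2_dom : Dom σ :=
  dom_of_closed (caseB2_inv hj hinv hdom hasc hpre hu hfixj hσi hσj hσu hσo)
    (caseB2_closed hj hinv hdom hasc hpre hu hfixj hσi hσj hσu hσo)

lemma caseB2_diag : ∀ a : Fin n, (a < σ a) ↔ (a < τ a) := by
  intro a
  have hij' : i < j := hij hj hinv hdom hasc hpre
  rcases eq_or_ne a i with h1 | h1
  · rw [h1, hσi]
    simp only [lt_irrefl, false_iff, not_lt]
    exact hu.le
  rcases eq_or_ne a j with h2 | h2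
  · rw [h2, hσj, hfixj]
    constructor
    · intro h; exact absurd (lt_trans h (lt_trans hu hij')) (lt_irrefl j)
    · intro h; exact absurd h (lt_irrefl j)
  rcases eq_or_ne a (τ i) with rfl | h3
  · rw [hσu, hinv]
    constructor
    · intro _; exact hu
    · intro _; exact lt_trans hu hij'
  · rw [hσo a h1 h2 h3]

end CaseB2

section CaseB3
variable {σ : Equiv.Perm (Fin n)} (hji : j < τ i)
  (hσi : σ i = τ j) (hσj : σ j = τ i) (hσu : σ (τ i) = j) (hσv : σ (τ j) = i)
  (hσo : ∀ x, x ≠ i → x ≠ j → x ≠ τ i → x ≠ τ j → σ x = τ x)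

include hji hσi hσj hσu hσv hσo

lemma caseB3_mem : ∀ a b : Fin n,
    InD σ a b ↔ (InD τ a b ∨ (a = i ∧ b = τ i) ∨ (a = τ i ∧ b = i)) := by
  have hij' : i < j := hij hj hinv hdom hasc hpre
  have hmid := MID3 hj hinv hdom hasc hpre hji
  have pack : ∀ x : Fin n,
      ((x : ℕ) = i → (σ x : ℕ) = (τ j : ℕ) ∧ (τ x : ℕ) = (τ i : ℕ)) ∧
      ((x : ℕ) = j → (σ x : ℕ) = (τ i : ℕ) ∧ (τ x : ℕ) = (τ j : ℕ)) ∧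
      ((x : ℕ) = (τ i : ℕ) → (σ x : ℕ) = j ∧ (τ x : ℕ) = i) ∧
      ((x : ℕ) = (τ j : ℕ) → (σ x : ℕ) = i ∧ (τ x : ℕ) = j) ∧
      ((x : ℕ) ≠ i → (x : ℕ) ≠ j → (x : ℕ) ≠ (τ i : ℕ) → (x : ℕ) ≠ (τ j : ℕ) →
        (σ x : ℕ) = (τ x : ℕ)) ∧
      ((τ x : ℕ) = i → (x : ℕ) = (τ i : ℕ)) ∧
      ((τ x : ℕ) = j → (x : ℕ) = (τ j : ℕ)) ∧
      ((τ i : ℕ) < x → (x : ℕ) < (τ j : ℕ) → (τ x : ℕ) < i) := by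
    intro x
    refine ⟨fun h => ?_, fun h => ?_, fun h => ?_, fun h => ?_, fun h1 h2 h3 h4 => ?_,
      fun h => ?_, fun h => ?_,
      fun h1 h2 => Fin.lt_def.1 (hmid x (Fin.lt_def.2 h1) (Fin.lt_def.2 h2))⟩
    · have hx : x = i := Fin.ext h
      rw [hx, hσi]; exact ⟨rfl, rfl⟩
    · have hx : x = j := Fin.ext h
      rw [hx, hσj]; exact ⟨rfl, rfl⟩
    · have hx : x = τ i := Fin.ext h
      rw [hx, hσu, hinv]; exact ⟨rfl, rfl⟩
    · have hx : x = τ j := Fin.ext h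
      rw [hx, hσv, hinv]; exact ⟨rfl, rfl⟩
    · rw [hσo x (fun he => h1 (congrArg Fin.val he)) (fun he => h2 (congrArg Fin.val he))
        (fun he => h3 (congrArg Fin.val he)) (fun he => h4 (congrArg Fin.val he))]
    · exact congrArg Fin.val ((tau_eq_iff hinv).1 (Fin.ext h))
    · exact congrArg Fin.val ((tau_eq_iff hinv).1 (Fin.ext h))
  intro a b
  have Ha := pack a
  have Hb := pack b
  have c1 : (j : ℕ) < (τ i : ℕ) := Fin.lt_def.1 hji
  have c2 : (τ i : ℕ) < (τ j : ℕ) := Fin.lt_def.1 hasc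
  have c3 : (i : ℕ) + 1 = j := hj.symm
  simp only [InD, Fin.lt_def, Fin.ext_iff]
  omega

lemma caseB3_inv : ∀ x, σ (σ x) = x := by
  intro x
  rcases eq_or_ne x i with rfl | h1
  · rw [hσi, hσv]
  rcases eq_or_ne x j with rfl | h2
  · rw [hσj, hσu]
  rcases eq_or_ne x (τ i) with rfl | h3
  · rw [hσu, hσj]
  rcases eq_or_ne x (τ j) with rfl | h4
  · rw [hσv, hσi]
  · rw [hσo x h1 h2 h3 h4]
    have t1 : τ x ≠ i := tau_ne_of_ne hinv h3
    have t2 : τ x ≠ j := tau_ne_of_ne hinv h4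
    have t3 : τ x ≠ τ i := fun he => h1 (τ.injective he)
    have t4 : τ x ≠ τ j := fun he => h2 (τ.injective he)
    rw [hσo (τ x) t1 t2 t3 t4, hinv]

lemma caseB3_half : ∀ a' b' : Fin n, a' ≤ i → b' ≤ τ i →
    (InD τ a' b' ∨ (a' = i ∧ b' = τ i)) := by
  intro a' b' ha hb
  rcases eq_or_lt_of_le hb with heq | hlt
  · rcases eq_or_lt_of_le ha with heqa | hlta
    · exact Or.inr ⟨heqa, heq⟩
    · refine Or.inl ?_
      rw [heq]
      exact ⟨hpre a' i hlta le_rfl, by rw [hinv]; exact hlta⟩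
  · have hri : InD τ i b' := ⟨hlt, rowfull hj hinv hdom hasc hpre le_rfl hlt⟩
    exact Or.inl (closure hinv hdom hri ha le_rfl)

lemma caseB3_closed : ∀ a b a' b' : Fin n, InD σ a b → a' ≤ a → b' ≤ b → InD σ a' b' := by
  intro a b a' b' h ha hb
  have hchar := caseB3_mem hj hinv hdom hasc hpre hji hσi hσj hσu hσv hσo
  rcases (hchar a b).1 h with h0 | ⟨ha1, hb1⟩ | ⟨ha1, hb1⟩
  · exact (hchar a' b').2 (Or.inl (closure hinv hdom h0 ha hb))
  · subst ha1; subst hb1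
    rcases caseB3_half hj hinv hdom hasc hpre hji hσi hσj hσu hσv hσo a' b' ha hb with
      h0 | ⟨h1, h2⟩
    · exact (hchar a' b').2 (Or.inl h0)
    · exact (hchar a' b').2 (Or.inr (Or.inl ⟨h1, h2⟩))
  · subst ha1; subst hb1
    rcases caseB3_half hj hinv hdom hasc hpre hji hσi hσj hσu hσv hσo b' a' hb ha with
      h0 | ⟨h1, h2⟩
    · exact (hchar a' b').2 (Or.inl (InD_comm.1 h0))
    · exact (hchar a' b').2 (Or.inr (Or.inr ⟨h2, h1⟩))

lemma caseB3_dom : Dom σ :=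
  dom_of_closed (caseB3_inv hj hinv hdom hasc hpre hji hσi hσj hσu hσv hσo)
    (caseB3_closed hj hinv hdom hasc hpre hji hσi hσj hσu hσv hσo)

lemma caseB3_diag : ∀ a : Fin n, (a < σ a) ↔ (a < τ a) := by
  intro a
  have hij' : i < j := hij hj hinv hdom hasc hpre
  have hii : i < τ i := lt_trans hij' hji
  rcases eq_or_ne a i with h1 | h1
  · rw [h1, hσi]
    simp only [iff_true_intro (lt_trans hii hasc), iff_true_intro hii]
  rcases eq_or_ne a j with h2 | h2
  · rw [h2, hσj]
    simp only [iff_true_intro hji, iff_true_intro (lt_trans hji hasc)]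
  rcases eq_or_ne a (τ i) with rfl | h3
  · rw [hσu, hinv]
    constructor
    · intro h; exact absurd (lt_trans hji h) (lt_irrefl j)
    · intro h; exact absurd (lt_trans hii h) (lt_irrefl i)
  rcases eq_or_ne a (τ j) with rfl | h4
  · rw [hσv, hinv]
    constructor
    · intro h; exact absurd (lt_trans hii (lt_trans hasc h)) (lt_irrefl i)
    · intro h; exact absurd (lt_trans hji (lt_trans hasc h)) (lt_irrefl j)
  · rw [hσo a h1 h2 h3 h4]

end CaseB3

section CaseA
variable {σ : Equiv.Perm (Fin n)} (hfixi : τ i = i) (hfixj : τ j = j)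
  (hσi : σ i = j) (hσj : σ j = i)
  (hσo : ∀ x, x ≠ i → x ≠ j → σ x = τ x)

include hfixi hfixj hσi hσj hσo

lemma caseA_mem : ∀ a b : Fin n,
    InD σ a b ↔ (InD τ a b ∨ (a = i ∧ b = i) ∨ (a = i ∧ b = i)) := by
  have pack : ∀ x : Fin n,
      ((x : ℕ) = i → (σ x : ℕ) = j ∧ (τ x : ℕ) = i) ∧
      ((x : ℕ) = j → (σ x : ℕ) = i ∧ (τ x : ℕ) = j) ∧
      ((x : ℕ) ≠ i → (x : ℕ) ≠ j → (σ x : ℕ) = (τ x : ℕ)) ∧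
      ((τ x : ℕ) = i → (x : ℕ) = i) ∧
      ((τ x : ℕ) = j → (x : ℕ) = j) := by
    intro x
    refine ⟨fun h => ?_, fun h => ?_, fun h1 h2 => ?_, fun h => ?_, fun h => ?_⟩
    · have hx : x = i := Fin.ext h
      rw [hx, hσi, hfixi]; exact ⟨rfl, rfl⟩
    · have hx : x = j := Fin.ext h
      rw [hx, hσj, hfixj]; exact ⟨rfl, rfl⟩
    · rw [hσo x (fun he => h1 (congrArg Fin.val he)) (fun he => h2 (congrArg Fin.val he))]
    · have hx : τ x = i := Fin.ext h
      rw [← hfixi] at hx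
      exact congrArg Fin.val (τ.injective hx)
    · have hx : τ x = j := Fin.ext h
      rw [← hfixj] at hx
      exact congrArg Fin.val (τ.injective hx)
  intro a b
  have Ha := pack a
  have Hb := pack b
  have c2 : (i : ℕ) + 1 = j := hj.symm
  simp only [InD, Fin.lt_def, Fin.ext_iff]
  omega

lemma caseA_inv : ∀ x, σ (σ x) = x := by
  intro x
  rcases eq_or_ne x i with rfl | h1
  · rw [hσi, hσj]
  rcases eq_or_ne x j with rfl | h2
  · rw [hσj, hσi]
  · rw [hσo x h1 h2]
    have t1 : τ x ≠ i := tau_ne_of_ne hinv (by rw [hfixi]; exact h1)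
    have t2 : τ x ≠ j := tau_ne_of_ne hinv (by rw [hfixj]; exact h2)
    rw [hσo (τ x) t1 t2, hinv]

lemma caseA_half : ∀ a' b' : Fin n, a' ≤ i → b' ≤ i →
    (InD τ a' b' ∨ (a' = i ∧ b' = i)) := by
  intro a' b' ha hb
  rcases eq_or_lt_of_le hb with heq | hlt
  · rcases eq_or_lt_of_le ha with heqa | hlta
    · exact Or.inr ⟨heqa, heq⟩
    · refine Or.inl ?_
      rw [heq]
      refine ⟨?_, by rw [hfixi]; exact hlta⟩
      have := hpre a' i hlta le_rfl
      rw [hfixi] at this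
      exact this
  · have hri : InD τ i b' := ⟨by rw [hfixi]; exact hlt,
      rowfull hj hinv hdom hasc hpre le_rfl (by rw [hfixi]; exact hlt)⟩
    exact Or.inl (closure hinv hdom hri ha le_rfl)

lemma caseA_closed : ∀ a b a' b' : Fin n, InD σ a b → a' ≤ a → b' ≤ b → InD σ a' b' := by
  intro a b a' b' h ha hb
  have hchar := caseA_mem hj hinv hdom hasc hpre hfixi hfixj hσi hσj hσo
  rcases (hchar a b).1 h with h0 | ⟨ha1, hb1⟩ | ⟨ha1, hb1⟩ <;>
    [skip; (subst ha1; subst hb1); (subst ha1; subst hb1)]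
  · exact (hchar a' b').2 (Or.inl (closure hinv hdom h0 ha hb))
  all_goals
    rcases caseA_half hj hinv hdom hasc hpre hfixi hfixj hσi hσj hσo a' b' ha hb with
      h0 | ⟨h1, h2⟩
  · exact (hchar a' b').2 (Or.inl h0)
  · exact (hchar a' b').2 (Or.inr (Or.inl ⟨h1, h2⟩))
  · exact (hchar a' b').2 (Or.inl h0)
  · exact (hchar a' b').2 (Or.inr (Or.inl ⟨h1, h2⟩))

lemma caseA_dom : Dom σ :=
  dom_of_closed (caseA_inv hj hinv hdom hasc hpre hfixi hfixj hσi hσj hσo)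
    (caseA_closed hj hinv hdom hasc hpre hfixi hfixj hσi hσj hσo)

lemma caseA_diag : ∀ a : Fin n, (a < σ a) ↔ (a = i ∨ a < τ a) := by
  intro a
  have hij' : i < j := hij hj hinv hdom hasc hpre
  rcases eq_or_ne a i with h1 | h1
  · rw [h1, hσi]
    constructor
    · intro _; exact Or.inl rfl
    · intro _; exact hij'
  rcases eq_or_ne a j with h2 | h2
  · rw [h2, hσj, hfixj]
    constructor
    · intro h; exact absurd (lt_trans hij' h) (lt_irrefl i)
    · rintro (h | h)
      · exact absurd h (ne_of_gt hij')
      · exact absurd h (lt_irrefl j)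
  · rw [hσo a h1 h2]
    constructor
    · exact fun h => Or.inr h
    · rintro (h | h)
      · exact absurd h h1
      · exact h

end CaseA
end FirstAscent

lemma main {n : ℕ} : ∀ (k : ℕ) (τ : Equiv.Perm (Fin n)), (∀ x, τ (τ x) = x) → Dom τ →
    n * n + 1 - invLen τ ≤ k → IsInvSchubert τ (Pol τ) := by
  intro k
  induction k with
  | zero =>
    intro τ hinv hdom hk
    exfalso
    have h1 : invLen τ ≤ n * n := by
      have h2 : (invDiagram n τ).card ≤ (Finset.univ : Finset (Fin n × Fin n)).card := by
        rw [invDiagram]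
        exact card_filter_le _ _
      have h3 : (Finset.univ : Finset (Fin n × Fin n)).card = n * n := by
        rw [card_univ, Fintype.card_prod, Fintype.card_fin]
      rw [invLen]
      omega
    omega
  | succ k ih =>
    intro τ hinv hdom hk
    by_cases hall : ∀ (m : Fin n) (hm : (m:ℕ)+1 < n), τ ⟨(m:ℕ)+1, hm⟩ < τ m
    · rw [eq_w0 hall, Pol_w0]
      exact IsInvSchubert.base
    · push_neg at hall
      obtain ⟨m0, hm0, hm0'⟩ := hall
      have hm0asc : τ m0 < τ (⟨(m0:ℕ)+1, hm0⟩ : Fin n) := asc_of_not_lt hm0 hm0'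
      set S : Finset (Fin n) := Finset.univ.filter
        (fun m : Fin n => ∃ hm : (m:ℕ)+1 < n, τ m < τ ⟨(m:ℕ)+1, hm⟩) with hS
      have hm0S : m0 ∈ S := by
        rw [hS, mem_filter]
        exact ⟨mem_univ _, hm0, hm0asc⟩
      have hSne : S.Nonempty := ⟨m0, hm0S⟩
      set i := S.min' hSne with hidef
      have hiS : i ∈ S := S.min'_mem hSne
      rw [hS, mem_filter] at hiS
      obtain ⟨-, hi, hasc0⟩ := hiS
      set j : Fin n := (⟨(i:ℕ)+1, hi⟩ : Fin n) with hjdef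
      have hj : (j : ℕ) = (i : ℕ) + 1 := rfl
      have hasc : τ i < τ j := hasc0
      have hmin : ∀ m : Fin n, m < i → ∀ hm : (m:ℕ)+1 < n, τ ⟨(m:ℕ)+1, hm⟩ < τ m := by
        intro m hmi hm
        by_contra hno
        have hasc' : τ m < τ (⟨(m:ℕ)+1, hm⟩ : Fin n) := asc_of_not_lt hm (not_lt.1 hno)
        have hmS : m ∈ S := by
          rw [hS, mem_filter]
          exact ⟨mem_univ _, hm, hasc'⟩
        exact absurd (S.min'_le m hmS) (not_le.2 hmi)
      have hpre : ∀ a b : Fin n, a < b → b ≤ i → τ b < τ a := pre_of_min hmin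
      have hij' : i < j := hij hj hinv hdom hasc hpre
      have hne : i ≠ j := ne_of_lt hij'
      have hnotlt : ¬ τ j < τ i := not_lt.2 hasc.le
      have hcard : invLen τ ≤ n * n := by
        have h2 : (invDiagram n τ).card ≤ (Finset.univ : Finset (Fin n × Fin n)).card := by
          rw [invDiagram]
          exact card_filter_le _ _
        have h3 : (Finset.univ : Finset (Fin n × Fin n)).card = n * n := by
          rw [card_univ, Fintype.card_prod, Fintype.card_fin]
        rw [invLen]
        omega
      set σ := mAct i τ with hσdef
      have hsym : MvPolynomial.rename (Equiv.swap i j) (Pol τ) = Pol τ :=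
        rename_Pol (sym_step hj hinv hdom hasc hpre)
      rcases lt_trichotomy (τ i) i with hlt | heq | hgt
      · -- Case B2 : τ i < i
        have hfixj : τ j = j := LB2 hj hinv hdom hasc hpre hlt
        have hnotA : ¬ (τ i = i ∧ τ j = j) := fun h => absurd h.1 (ne_of_lt hlt)
        have hmeq : σ = Equiv.swap i j * τ * Equiv.swap i j := mAct_eq_B hi hnotlt hnotA
        have hui : τ i ≠ i := ne_of_lt hlt
        have huj : τ i ≠ j := ne_of_lt (lt_trans hlt hij')
        have happ : ∀ x, σ x = Equiv.swap i j (τ (Equiv.swap i j x)) := by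
          intro x
          rw [hmeq, Equiv.Perm.mul_apply, Equiv.Perm.mul_apply]
        have hσi : σ i = i := by
          rw [happ, Equiv.swap_apply_left, hfixj, Equiv.swap_apply_right]
        have hσj : σ j = τ i := by
          rw [happ, Equiv.swap_apply_right, Equiv.swap_apply_of_ne_of_ne hui huj]
        have hσu : σ (τ i) = j := by
          rw [happ, Equiv.swap_apply_of_ne_of_ne hui huj, hinv, Equiv.swap_apply_left]
        have hσo : ∀ x, x ≠ i → x ≠ j → x ≠ τ i → σ x = τ x := by
          intro x h1 h2 h3
          have t1 : τ x ≠ i := tau_ne_of_ne hinv h3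
          have t2 : τ x ≠ j := tau_ne_of_ne hinv (by rw [hfixj]; exact h2)
          rw [happ, Equiv.swap_apply_of_ne_of_ne h1 h2,
            Equiv.swap_apply_of_ne_of_ne t1 t2]
        have hchar := caseB2_mem hj hinv hdom hasc hpre hlt hfixj hσi hσj hσu hσo
        have hnew : ¬ InD τ (τ i) i := by
          intro h
          have h4 := h.1
          rw [hinv] at h4
          exact absurd h4 (lt_irrefl i)
        obtain ⟨hD, hnc⟩ := diagram_insert (c := (τ i, i)) hlt.le hchar hnew
        have hlen : invLen σ = invLen τ + 1 := by
          rw [invLen, invLen, hD, card_insert_of_notMem hnc]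
        have hdiag := caseB2_diag hj hinv hdom hasc hpre hlt hfixj hσi hσj hσu hσo
        have hfac : Pol σ = (X (τ i) + X i) * Pol τ :=
          Pol_factor_off (c := (τ i, i)) hlt hD hnc hdiag
        have hFc : (X (τ i) + X i : MvPolynomial (Fin n) ℤ)
            - MvPolynomial.rename (Equiv.swap i j) (X (τ i) + X i) = X i - X j := by
          rw [map_add, MvPolynomial.rename_X, MvPolynomial.rename_X,
            Equiv.swap_apply_of_ne_of_ne hui huj, Equiv.swap_apply_left]
          ring
        have hdd : ddiff i j (Pol σ) = Pol τ := ddiff_step hne hfac hFc hsym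
        have hinv' : ∀ x, σ (σ x) = x :=
          caseB2_inv hj hinv hdom hasc hpre hlt hfixj hσi hσj hσu hσo
        have hdom' : Dom σ := caseB2_dom hj hinv hdom hasc hpre hlt hfixj hσi hσj hσu hσo
        have ihσ : IsInvSchubert σ (Pol σ) := ih σ hinv' hdom' (by omega)
        have hstep := IsInvSchubert.step τ i hi (Pol σ) (hσdef ▸ ihσ) (hσdef ▸ hlen)
        have hstep' : IsInvSchubert τ (ddiff i j (Pol σ)) := hstep
        rwa [hdd] at hstep'
      · -- Case A : τ i = i
        have hfixj : τ j = j := LB1 hj hinv hdom hasc hpre heq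
        have hmeq : σ = Equiv.swap i j * τ := mAct_eq_A hi hnotlt ⟨heq, hfixj⟩
        have happ : ∀ x, σ x = Equiv.swap i j (τ x) := by
          intro x
          rw [hmeq, Equiv.Perm.mul_apply]
        have hσi : σ i = j := by rw [happ, heq, Equiv.swap_apply_left]
        have hσj : σ j = i := by rw [happ, hfixj, Equiv.swap_apply_right]
        have hσo : ∀ x, x ≠ i → x ≠ j → σ x = τ x := by
          intro x h1 h2
          have t1 : τ x ≠ i := tau_ne_of_ne hinv (by rw [heq]; exact h1)
          have t2 : τ x ≠ j := tau_ne_of_ne hinv (by rw [hfixj]; exact h2)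
          rw [happ, Equiv.swap_apply_of_ne_of_ne t1 t2]
        have hchar := caseA_mem hj hinv hdom hasc hpre heq hfixj hσi hσj hσo
        have hnew : ¬ InD τ i i := by
          intro h
          have h4 := h.1
          rw [heq] at h4
          exact absurd h4 (lt_irrefl i)
        obtain ⟨hD, hnc⟩ := diagram_insert (c := (i, i)) le_rfl hchar hnew
        have hlen : invLen σ = invLen τ + 1 := by
          rw [invLen, invLen, hD, card_insert_of_notMem hnc]
        have hdiag := caseA_diag hj hinv hdom hasc hpre heq hfixj hσi hσj hσo
        have hfac : Pol σ = X i * Pol τ := Pol_factor_diag hD hdiag heq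
        have hFc : (X i : MvPolynomial (Fin n) ℤ)
            - MvPolynomial.rename (Equiv.swap i j) (X i) = X i - X j := by
          rw [MvPolynomial.rename_X, Equiv.swap_apply_left]
        have hdd : ddiff i j (Pol σ) = Pol τ := ddiff_step hne hfac hFc hsym
        have hinv' : ∀ x, σ (σ x) = x :=
          caseA_inv hj hinv hdom hasc hpre heq hfixj hσi hσj hσo
        have hdom' : Dom σ := caseA_dom hj hinv hdom hasc hpre heq hfixj hσi hσj hσo
        have ihσ : IsInvSchubert σ (Pol σ) := ih σ hinv' hdom' (by omega)
        have hstep := IsInvSchubert.step τ i hi (Pol σ) (hσdef ▸ ihσ) (hσdef ▸ hlen)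
        have hstep' : IsInvSchubert τ (ddiff i j (Pol σ)) := hstep
        rwa [hdd] at hstep'
      · -- Case B3 : i < τ i
        have hji : j < τ i := LB3 hj hinv hdom hasc hpre hgt
        have hnotA : ¬ (τ i = i ∧ τ j = j) := fun h => absurd h.1 (ne_of_gt hgt)
        have hmeq : σ = Equiv.swap i j * τ * Equiv.swap i j := mAct_eq_B hi hnotlt hnotA
        have hui : τ i ≠ i := ne_of_gt hgt
        have huj : τ i ≠ j := ne_of_gt hji
        have hvi : τ j ≠ i := ne_of_gt (lt_trans (lt_trans hij' hji) hasc)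
        have hvj : τ j ≠ j := ne_of_gt (lt_trans hji hasc)
        have happ : ∀ x, σ x = Equiv.swap i j (τ (Equiv.swap i j x)) := by
          intro x
          rw [hmeq, Equiv.Perm.mul_apply, Equiv.Perm.mul_apply]
        have hσi : σ i = τ j := by
          rw [happ, Equiv.swap_apply_left, Equiv.swap_apply_of_ne_of_ne hvi hvj]
        have hσj : σ j = τ i := by
          rw [happ, Equiv.swap_apply_right, Equiv.swap_apply_of_ne_of_ne hui huj]
        have hσu : σ (τ i) = j := by
          rw [happ, Equiv.swap_apply_of_ne_of_ne hui huj, hinv, Equiv.swap_apply_left]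
        have hσv : σ (τ j) = i := by
          rw [happ, Equiv.swap_apply_of_ne_of_ne hvi hvj, hinv, Equiv.swap_apply_right]
        have hσo : ∀ x, x ≠ i → x ≠ j → x ≠ τ i → x ≠ τ j → σ x = τ x := by
          intro x h1 h2 h3 h4
          have t1 : τ x ≠ i := tau_ne_of_ne hinv h3
          have t2 : τ x ≠ j := tau_ne_of_ne hinv h4
          rw [happ, Equiv.swap_apply_of_ne_of_ne h1 h2,
            Equiv.swap_apply_of_ne_of_ne t1 t2]
        have hchar := caseB3_mem hj hinv hdom hasc hpre hji hσi hσj hσu hσv hσo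
        have hnew : ¬ InD τ i (τ i) := fun h => absurd h.1 (lt_irrefl (τ i))
        obtain ⟨hD, hnc⟩ :=
          diagram_insert (c := (i, τ i)) (lt_trans hij' hji).le hchar hnew
        have hlen : invLen σ = invLen τ + 1 := by
          rw [invLen, invLen, hD, card_insert_of_notMem hnc]
        have hdiag := caseB3_diag hj hinv hdom hasc hpre hji hσi hσj hσu hσv hσo
        have hfac : Pol σ = (X i + X (τ i)) * Pol τ :=
          Pol_factor_off (c := (i, τ i)) hgt hD hnc hdiag
        have hFc : (X i + X (τ i) : MvPolynomial (Fin n) ℤ)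
            - MvPolynomial.rename (Equiv.swap i j) (X i + X (τ i)) = X i - X j := by
          rw [map_add, MvPolynomial.rename_X, MvPolynomial.rename_X,
            Equiv.swap_apply_of_ne_of_ne hui huj, Equiv.swap_apply_left]
          ring
        have hdd : ddiff i j (Pol σ) = Pol τ := ddiff_step hne hfac hFc hsym
        have hinv' : ∀ x, σ (σ x) = x :=
          caseB3_inv hj hinv hdom hasc hpre hji hσi hσj hσu hσv hσo
        have hdom' : Dom σ := caseB3_dom hj hinv hdom hasc hpre hji hσi hσj hσu hσv hσo
        have ihσ : IsInvSchubert σ (Pol σ) := ih σ hinv' hdom' (by omega)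
        have hstep := IsInvSchubert.step τ i hi (Pol σ) (hσdef ▸ ihσ) (hσdef ▸ hlen)
        have hstep' : IsInvSchubert τ (ddiff i j (Pol σ)) := hstep
        rwa [hdd] at hstep'

end ISP

/-- If `τ` is a dominant involution (an involution that is 132-avoiding as a
permutation), then its involution Schubert polynomial factors as
`Ŝ_τ = ∏_{(i,i) ∈ D̂₁(τ)} x_i · ∏_{(i,j) ∈ D̂₂(τ)} (x_i + x_j)`. -/
theorem inv_schubert_dominant (n : ℕ) (τ : Equiv.Perm (Fin n)) (hτ : τ * τ = 1)
    (hdom : ¬ ∃ i j k : Fin n, i < j ∧ j < k ∧ τ i < τ k ∧ τ k < τ j) :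
    IsInvSchubert τ
      ((∏ i ∈ Finset.univ.filter fun i : Fin n => i < τ i, X i) *
        ∏ p ∈ (invDiagram n τ).filter fun p => p.1 < p.2, (X p.1 + X p.2)) := by
  have hinv : ∀ x, τ (τ x) = x := fun x => by
    rw [← Equiv.Perm.mul_apply, hτ, Equiv.Perm.one_apply]
  have hdomp : ISP.Dom τ := fun a b c hab hbc h1 h2 => hdom ⟨a, b, c, hab, hbc, h1, h2⟩
  have h := ISP.main (n * n + 1 - invLen τ) τ hinv hdomp le_rfl
  exact h
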